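/- Let n urns receive k balls independently with i.i.d. locations, and let X_i be the indicator that urn i is nonempty. Then the variables X_1,...,X_n are negatively associated: for every subset A ⊆ {1,...,n} and every pair of increasing events (or bounded increasing functions) f depending only on {X_i : i ∈ A} and g depending only on {X_i : i ∉ A}, E[fg] ≤ E[f]E[g]. -/
import Mathlib


open Finset

private def occF (n k : ℕ) (ω : Fin k → Fin n) : Fin n → Bool :=
  fun i => decide (∃ j, ω j = i)

private lemma occF_cons (n k : ℕ) (i : Fin n) (ω : Fin k → Fin n) :
    occF n (k + 1) (Fin.cons i ω) = fun m => (decide (i = m)) || occF n k ω m := by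
  funext m
  simp [occF, Fin.exists_fin_succ, Fin.cons_succ, Fin.cons_zero]

private lemma bool_or_le_or (b : Bool) {x y : Bool} (h : x ≤ y) : (b || x) ≤ (b || y) := by
  cases b <;> simp [h]

private lemma bool_le_or (b x : Bool) : x ≤ (b || x) := by
  cases b <;> simp

private lemma alg_lemma (n : ℕ) (A : Finset (Fin n)) (p av bv : Fin n → ℝ) (a b : ℝ)
    (hp : ∀ i, 0 ≤ p i) (hp1 : ∑ i, p i = 1)
    (h1 : ∀ i ∈ A, bv i = b) (h2 : ∀ i ∉ A, av i = a)
    (h3 : ∀ i ∈ A, a ≤ av i) (h4 : ∀ i ∉ A, b ≤ bv i) :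
    ∑ i, p i * (av i * bv i) ≤ (∑ i, p i * av i) * (∑ i, p i * bv i) := by
  set α := ∑ i ∈ A, p i with hα
  set β := ∑ i ∈ Aᶜ, p i with hβ
  set u := ∑ i ∈ A, p i * av i with hu
  set v := ∑ i ∈ Aᶜ, p i * bv i with hv
  have hαβ : α + β = 1 := by rw [hα, hβ, Finset.sum_add_sum_compl, hp1]
  have hsum1 : ∑ i, p i * (av i * bv i) = b * u + a * v := by
    rw [← Finset.sum_add_sum_compl A]
    congr 1
    · rw [hu, Finset.mul_sum]
      refine Finset.sum_congr rfl fun i hi => ?_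
      rw [h1 i hi]; ring
    · rw [hv, Finset.mul_sum]
      refine Finset.sum_congr rfl fun i hi => ?_
      rw [h2 i (Finset.mem_compl.mp hi)]; ring
  have hsum2 : ∑ i, p i * av i = u + a * β := by
    rw [← Finset.sum_add_sum_compl A, ← hu]
    congr 1
    rw [hβ, Finset.mul_sum]
    refine Finset.sum_congr rfl fun i hi => ?_
    rw [h2 i (Finset.mem_compl.mp hi)]; ring
  have hsum3 : ∑ i, p i * bv i = b * α + v := by
    rw [← Finset.sum_add_sum_compl A, ← hv]
    congr 1
    rw [hα, Finset.mul_sum]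
    refine Finset.sum_congr rfl fun i hi => ?_
    rw [h1 i hi]; ring
  have hu' : a * α ≤ u := by
    rw [hα, hu, Finset.mul_sum]
    refine Finset.sum_le_sum fun i hi => ?_
    have := h3 i hi
    nlinarith [hp i]
  have hv' : b * β ≤ v := by
    rw [hβ, hv, Finset.mul_sum]
    refine Finset.sum_le_sum fun i hi => ?_
    have := h4 i (Finset.mem_compl.mp hi)
    nlinarith [hp i]
  rw [hsum1, hsum2, hsum3]
  have hid : (u + a * β) * (b * α + v) - (b * u + a * v)
      = (u - a * α) * (v - b * β) + (u * b + a * v) * (α + β - 1) := by ring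
  have h0 : (u * b + a * v) * (α + β - 1) = 0 := by
    have : α + β - 1 = 0 := by linarith
    rw [this, mul_zero]
  linarith [mul_nonneg (sub_nonneg.mpr hu') (sub_nonneg.mpr hv'), hid, h0]

private lemma aux (n : ℕ) (p : Fin n → ℝ) (hp : ∀ i, 0 ≤ p i) (hp1 : ∑ i, p i = 1)
    (k : ℕ) :
    ∀ (A : Finset (Fin n)) (f g : (Fin n → Bool) → ℝ),
      Monotone f → Monotone g →
      (∀ x y : Fin n → Bool, (∀ i ∈ A, x i = y i) → f x = f y) →
      (∀ x y : Fin n → Bool, (∀ i ∉ A, x i = y i) → g x = g y) →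
      (∑ ω : Fin k → Fin n, (∏ j, p (ω j)) * (f (occF n k ω) * g (occF n k ω)))
        ≤ (∑ ω : Fin k → Fin n, (∏ j, p (ω j)) * f (occF n k ω)) *
          (∑ ω : Fin k → Fin n, (∏ j, p (ω j)) * g (occF n k ω)) := by
  induction k with
  | zero =>
    intro A f g hf hg hfA hgA
    simp
  | succ k ih =>
    intro A f g hf hg hfA hgA
    -- weight nonnegativity
    have hw : ∀ ω : Fin k → Fin n, 0 ≤ ∏ j, p (ω j) :=
      fun ω => Finset.prod_nonneg fun j _ => hp (ω j)
    -- reindex sums over Fin (k+1) → Fin n via Fin.cons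
    have reindex : ∀ F : (Fin (k + 1) → Fin n) → ℝ,
        ∑ ω : Fin (k + 1) → Fin n, F ω
          = ∑ i : Fin n, ∑ ω : Fin k → Fin n, F (Fin.cons i ω) := by
      intro F
      calc ∑ ω : Fin (k + 1) → Fin n, F ω
          = ∑ q : Fin n × (Fin k → Fin n), F (Fin.cons q.1 q.2) :=
            (Fintype.sum_equiv (Fin.consEquiv fun _ => Fin n)
              (fun q => F (Fin.cons q.1 q.2)) F (fun q => rfl)).symm
        _ = ∑ i : Fin n, ∑ ω : Fin k → Fin n, F (Fin.cons i ω) := Fintype.sum_prod_type _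
    have prodcons : ∀ (i : Fin n) (ω : Fin k → Fin n),
        (∏ j, p ((Fin.cons i ω : Fin (k + 1) → Fin n) j)) = p i * ∏ j, p (ω j) := by
      intro i ω
      rw [Fin.prod_univ_succ]
      simp [Fin.cons_succ, Fin.cons_zero]
    -- conditional functions
    set fi : Fin n → (Fin n → Bool) → ℝ :=
      fun i x => f (fun m => (decide (i = m)) || x m) with hfi
    set gi : Fin n → (Fin n → Bool) → ℝ :=
      fun i x => g (fun m => (decide (i = m)) || x m) with hgi
    have hfiMono : ∀ i, Monotone (fi i) := by
      intro i x y hxy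
      exact hf fun m => bool_or_le_or _ (hxy m)
    have hgiMono : ∀ i, Monotone (gi i) := by
      intro i x y hxy
      exact hg fun m => bool_or_le_or _ (hxy m)
    have hfiA : ∀ i, ∀ x y : Fin n → Bool, (∀ m ∈ A, x m = y m) → fi i x = fi i y := by
      intro i x y h
      exact hfA _ _ fun m hm => by rw [h m hm]
    have hgiA : ∀ i, ∀ x y : Fin n → Bool, (∀ m ∉ A, x m = y m) → gi i x = gi i y := by
      intro i x y h
      exact hgA _ _ fun m hm => by rw [h m hm]
    -- values
    set av : Fin n → ℝ := fun i => ∑ ω : Fin k → Fin n, (∏ j, p (ω j)) * fi i (occF n k ω) with hav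
    set bv : Fin n → ℝ := fun i => ∑ ω : Fin k → Fin n, (∏ j, p (ω j)) * gi i (occF n k ω) with hbv
    set a : ℝ := ∑ ω : Fin k → Fin n, (∏ j, p (ω j)) * f (occF n k ω) with ha
    set b : ℝ := ∑ ω : Fin k → Fin n, (∏ j, p (ω j)) * g (occF n k ω) with hb
    have key : ∀ i, ∑ ω : Fin k → Fin n, (∏ j, p (ω j)) * (fi i (occF n k ω) * gi i (occF n k ω))
        ≤ av i * bv i := by
      intro i
      exact ih A (fi i) (gi i) (hfiMono i) (hgiMono i) (hfiA i) (hgiA i)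
    -- equalities / inequalities for av bv
    have hbvA : ∀ i ∈ A, bv i = b := by
      intro i hi
      refine Finset.sum_congr rfl fun ω _ => ?_
      congr 1
      refine hgA _ _ fun m hm => ?_
      have : i ≠ m := fun h => hm (h ▸ hi)
      simp [hgi, this]
    have havA : ∀ i ∉ A, av i = a := by
      intro i hi
      refine Finset.sum_congr rfl fun ω _ => ?_
      congr 1
      refine hfA _ _ fun m hm => ?_
      have : i ≠ m := fun h => hi (h ▸ hm)
      simp [hfi, this]
    have havGe : ∀ i, a ≤ av i := by
      intro i
      refine Finset.sum_le_sum fun ω _ => ?_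
      refine mul_le_mul_of_nonneg_left ?_ (hw ω)
      exact hf fun m => bool_le_or _ _
    have hbvGe : ∀ i, b ≤ bv i := by
      intro i
      refine Finset.sum_le_sum fun ω _ => ?_
      refine mul_le_mul_of_nonneg_left ?_ (hw ω)
      exact hg fun m => bool_le_or _ _
    -- rewrite main sums
    have e1 : ∑ ω : Fin (k + 1) → Fin n, (∏ j, p (ω j)) * (f (occF n (k + 1) ω) * g (occF n (k + 1) ω))
        = ∑ i : Fin n, p i * ∑ ω : Fin k → Fin n,
            (∏ j, p (ω j)) * (fi i (occF n k ω) * gi i (occF n k ω)) := by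
      rw [reindex]
      refine Finset.sum_congr rfl fun i _ => ?_
      rw [Finset.mul_sum]
      refine Finset.sum_congr rfl fun ω _ => ?_
      rw [prodcons, occF_cons]
      ring
    have e2 : ∑ ω : Fin (k + 1) → Fin n, (∏ j, p (ω j)) * f (occF n (k + 1) ω)
        = ∑ i : Fin n, p i * av i := by
      rw [reindex]
      refine Finset.sum_congr rfl fun i _ => ?_
      rw [hav, Finset.mul_sum]
      refine Finset.sum_congr rfl fun ω _ => ?_
      rw [prodcons, occF_cons]
      ring
    have e3 : ∑ ω : Fin (k + 1) → Fin n, (∏ j, p (ω j)) * g (occF n (k + 1) ω)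
        = ∑ i : Fin n, p i * bv i := by
      rw [reindex]
      refine Finset.sum_congr rfl fun i _ => ?_
      rw [hbv, Finset.mul_sum]
      refine Finset.sum_congr rfl fun ω _ => ?_
      rw [prodcons, occF_cons]
      ring
    rw [e1, e2, e3]
    calc ∑ i : Fin n, p i * ∑ ω : Fin k → Fin n,
            (∏ j, p (ω j)) * (fi i (occF n k ω) * gi i (occF n k ω))
        ≤ ∑ i : Fin n, p i * (av i * bv i) :=
          Finset.sum_le_sum fun i _ => mul_le_mul_of_nonneg_left (key i) (hp i)
      _ ≤ (∑ i, p i * av i) * (∑ i, p i * bv i) :=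
          alg_lemma n A p av bv a b hp hp1 hbvA havA (fun i _ => havGe i) (fun i _ => hbvGe i)

/-- Urn model: `k` balls are dropped independently into `n` urns with i.i.d. locations,
and `occ ω i` is the indicator that urn `i` is nonempty.  The occupation indicators are
negatively associated: for every `A ⊆ {1,…,n}` and increasing functions `f` depending
only on coordinates in `A` and `g` depending only on coordinates outside `A`,
`E[f g] ≤ E[f] E[g]`. -/
theorem stmt_15 (n k : ℕ)
    (p : Fin n → ℝ) (hp : ∀ i, 0 ≤ p i) (hp1 : ∑ i, p i = 1)
    (Pw : (Fin k → Fin n) → ℝ) (hPw : ∀ ω, Pw ω = ∏ j, p (ω j))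
    (occ : (Fin k → Fin n) → Fin n → Bool)
    (hocc : ∀ ω i, occ ω i = decide (∃ j, ω j = i)) :
    ∀ (A : Finset (Fin n)) (f g : (Fin n → Bool) → ℝ),
      Monotone f → Monotone g →
      (∀ x y : Fin n → Bool, (∀ i ∈ A, x i = y i) → f x = f y) →
      (∀ x y : Fin n → Bool, (∀ i ∉ A, x i = y i) → g x = g y) →
      (∑ ω, Pw ω * (f (occ ω) * g (occ ω)))
        ≤ (∑ ω, Pw ω * f (occ ω)) * (∑ ω, Pw ω * g (occ ω)) := by
  intro A f g hf hg hfA hgA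
  have hocc' : ∀ ω, occ ω = occF n k ω := fun ω => funext fun i => hocc ω i
  simp only [hPw, hocc']
  exact aux n p hp hp1 k A f g hf hg hfA hgA
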